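/- The sets X and Y are disjoint: X ∩ Y = ∅. Equivalently, no vector of the form a·u + b·v + c·w with a,b,c all positive or all negative can be written as Rⁱ·q for i ∈ {1,2,3} and q = x·u + y·v + z·w with x,y,z all positive or all negative. -/
import Mathlib


open Matrix

/-- The matrix `R`. -/
def R : Matrix (Fin 3) (Fin 3) ℝ := !![0,0,-1; 1,0,-1; 0,1,-1]

/-- The matrix `T`. -/
def T : Matrix (Fin 3) (Fin 3) ℝ := !![-1,0,0; 2,1,0; -4,0,1]

/-- The vector `u = (1,-2,1)`. -/
def u : Fin 3 → ℝ := ![1,-2,1]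

/-- The vector `v = (1,0,3)`. -/
def v : Fin 3 → ℝ := ![1,0,3]

/-- The vector `w = (0,-1,1)`. -/
def w : Fin 3 → ℝ := ![0,-1,1]

/-- The open cone `C` generated by `u`, `v`, `w`. -/
def C : Set (Fin 3 → ℝ) :=
  {p | ∃ a b c : ℝ, 0 < a ∧ 0 < b ∧ 0 < c ∧ p = a • u + b • v + c • w}

/-- `X = C ∪ (−C)`. -/
def X : Set (Fin 3 → ℝ) := C ∪ (-C)

/-- `Y = R·X ∪ R²·X ∪ R³·X`. -/
def Y : Set (Fin 3 → ℝ) :=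
  R.mulVec '' X ∪ (R ^ 2).mulVec '' X ∪ (R ^ 3).mulVec '' X

lemma memX {p : Fin 3 → ℝ} (h : p ∈ X) :
    ∃ a b c : ℝ, ((0 < a ∧ 0 < b ∧ 0 < c) ∨ (a < 0 ∧ b < 0 ∧ c < 0)) ∧
      p = a • u + b • v + c • w := by
  rcases h with h | h
  · obtain ⟨a, b, c, ha, hb, hc, h⟩ := h
    exact ⟨a, b, c, Or.inl ⟨ha, hb, hc⟩, h⟩
  · obtain ⟨a, b, c, ha, hb, hc, h⟩ := Set.mem_neg.mp h
    refine ⟨-a, -b, -c, Or.inr ⟨by linarith, by linarith, by linarith⟩, ?_⟩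
    have hp : p = -(a • u + b • v + c • w) := by rw [← h, neg_neg]
    rw [hp]
    simp [neg_add, neg_smul]; abel

/-- The sets `X` and `Y` are disjoint. -/
theorem X_inter_Y_empty : X ∩ Y = ∅ := by
  ext p
  simp only [Set.mem_inter_iff, Set.mem_empty_iff_false, iff_false]
  rintro ⟨hX, hY⟩
  obtain ⟨a, b, c, hs1, hp⟩ := memX hX
  rcases hY with (⟨q, hqX, hq⟩ | ⟨q, hqX, hq⟩) | ⟨q, hqX, hq⟩ <;>
  · obtain ⟨x, y, z, hs2, hq'⟩ := memX hqX
    rw [hq', hp] at hq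
    have e0 := congr_fun hq 0
    have e1 := congr_fun hq 1
    have e2 := congr_fun hq 2
    simp [R, u, v, w, Matrix.mulVec, dotProduct, Fin.sum_univ_three,
      Matrix.mul_apply, pow_succ, pow_zero, Matrix.one_mul] at e0 e1 e2
    rcases hs1 with ⟨h1, h2, h3⟩ | ⟨h1, h2, h3⟩ <;>
      rcases hs2 with ⟨h4, h5, h6⟩ | ⟨h4, h5, h6⟩ <;> linarith
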